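/- Let 0 < ε ≤ 1 and n ≥ 2. For a finite unit-weight graph G on n vertices, any vertex v, and k = Θ(ε^{−2} log² n) sufficiently large, the local density ρ*_k(v) of v within its k-hop neighbourhood H_k(v) satisfies (1+ε)^{−1} ρ*(v) ≤ ρ*_k(v) ≤ (1+ε) ρ*(v). -/

import Mathlib

open Finset Real

noncomputable section

variable {V : Type*}

/-- The out-degree of `u` in a fractional orientation `o`. -/
def outdeg [Fintype V] (o : V → V → ℝ) (u : V) : ℝ := ∑ x : V, o u x

/-- `o` is a fractional orientation of the weighted graph `(G, w)`:
nonnegative values on directed edge-halves, supported on edges, summing to the edge weight. -/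
def IsOrientation [Fintype V] (G : SimpleGraph V) (w : V → V → ℝ) (o : V → V → ℝ) : Prop :=
  (∀ u v, 0 ≤ o u v) ∧ (∀ u v, ¬ G.Adj u v → o u v = 0) ∧
    (∀ u v, G.Adj u v → o u v + o v u = w u v)

/-- A fractional orientation is locally fair if positive weight on `u → v`
implies `g(u) ≤ g(v)`. -/
def LocallyFair [Fintype V] (o : V → V → ℝ) : Prop :=
  ∀ u v, 0 < o u v → outdeg o u ≤ outdeg o v

/-- A fractional orientation is `η`-fair if positive weight on `u → v`
implies `g(u) ≤ (1+η)·g(v)`. -/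
def EtaFair [Fintype V] (η : ℝ) (o : V → V → ℝ) : Prop :=
  ∀ u v, 0 < o u v → outdeg o u ≤ (1 + η) * outdeg o v

/-- Total weight of edges of `G` inside the vertex set `S`. -/
def edgeWeight [Fintype V] (G : SimpleGraph V) [DecidableRel G.Adj] (w : V → V → ℝ)
    (S : Finset V) : ℝ :=
  (∑ u ∈ S, ∑ v ∈ S, if G.Adj u v then w u v else 0) / 2

/-- Density of the subgraph induced on `S`. -/
def densityOn [Fintype V] (G : SimpleGraph V) [DecidableRel G.Adj] (w : V → V → ℝ)
    (S : Finset V) : ℝ :=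
  edgeWeight G w S / S.card

/-- A unit-weight fractional orientation of the subgraph of `G` induced on `s`,
encoded on the ambient vertex set. -/
def OrientationOn [Fintype V] (G : SimpleGraph V) (s : Finset V) (o : V → V → ℝ) : Prop :=
  (∀ u v, 0 ≤ o u v) ∧
    (∀ u v, ¬ (G.Adj u v ∧ u ∈ s ∧ v ∈ s) → o u v = 0) ∧
    (∀ u v, G.Adj u v → u ∈ s → v ∈ s → o u v + o v u = 1)

open Classical in
/-- The `k`-hop neighbourhood of `v`. -/
noncomputable def hopBall [Fintype V] (G : SimpleGraph V) (v : V) (k : ℕ) : Finset V :=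
  Finset.univ.filter fun u => G.Reachable v u ∧ G.dist v u ≤ k

lemma outdeg_nonneg [Fintype V] {o : V → V → ℝ} (h : ∀ u w, 0 ≤ o u w) (u : V) :
    0 ≤ outdeg o u := Finset.sum_nonneg fun _ _ => h _ _

/-- Upper bound: the locally fair out-degree in an induced subgraph never exceeds
the locally fair out-degree in the full graph. -/
lemma outdeg_sub_le [Fintype V] (G : SimpleGraph V) (s : Finset V) (o ok : V → V → ℝ)
    (ho : IsOrientation G (fun _ _ => 1) o) (hf : LocallyFair o)
    (hok : OrientationOn G s ok) (hkf : LocallyFair ok) (v : V) :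
    outdeg ok v ≤ outdeg o v := by
  classical
  by_contra hlt
  push_neg at hlt
  obtain ⟨u0, -, hu0⟩ := Finset.exists_max_image Finset.univ
    (fun u => outdeg ok u - outdeg o u) ⟨v, Finset.mem_univ v⟩
  set δ := outdeg ok u0 - outdeg o u0 with hδdef
  have hδpos : 0 < δ := lt_of_lt_of_le (by linarith) (hu0 v (Finset.mem_univ v))
  set M : Finset V := Finset.univ.filter (fun u => δ ≤ outdeg ok u - outdeg o u) with hM
  have hmemM : ∀ u, u ∈ M ↔ δ ≤ outdeg ok u - outdeg o u := by
    intro u; simp [hM]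
  have hu0M : u0 ∈ M := (hmemM u0).2 le_rfl
  -- closure
  have hclose : ∀ u ∈ M, ∀ w, w ∉ M → ok u w ≤ o u w := by
    intro u hu w hw
    by_contra hgt
    push_neg at hgt
    have hokpos : 0 < ok u w := lt_of_le_of_lt (ho.1 u w) hgt
    have hsupp : G.Adj u w ∧ u ∈ s ∧ w ∈ s := by
      by_contra hc
      exact absurd (hok.2.1 u w hc) (ne_of_gt hokpos)
    obtain ⟨hadj, hus, hws⟩ := hsupp
    have hsok : ok u w + ok w u = 1 := hok.2.2 u w hadj hus hws
    have hso : o u w + o w u = 1 := by simpa using ho.2.2 u w hadj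
    have howu : 0 < o w u := by
      have := hok.1 w u; linarith
    have h1 : outdeg ok u ≤ outdeg ok w := hkf u w hokpos
    have h2 : outdeg o w ≤ outdeg o u := hf w u howu
    have := (hmemM u).1 hu
    exact hw ((hmemM w).2 (by linarith))
  -- sum over M
  have hsum : ∑ u ∈ M, (outdeg ok u - outdeg o u) ≤ 0 := by
    have hexp : ∑ u ∈ M, (outdeg ok u - outdeg o u)
        = (∑ u ∈ M, ∑ w ∈ M, (ok u w - o u w))
          + ∑ u ∈ M, ∑ w ∈ Mᶜ, (ok u w - o u w) := by
      rw [← Finset.sum_add_distrib]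
      apply Finset.sum_congr rfl
      intro u _
      rw [Finset.sum_add_sum_compl, Finset.sum_sub_distrib]
      simp [outdeg]
    have hpair : ∀ u w : V, (ok u w - o u w) + (ok w u - o w u) ≤ 0 := by
      intro u w
      by_cases hadj : G.Adj u w
      · have hso : o u w + o w u = 1 := by simpa using ho.2.2 u w hadj
        by_cases hin : u ∈ s ∧ w ∈ s
        · have := hok.2.2 u w hadj hin.1 hin.2; linarith
        · have h1 : ok u w = 0 := hok.2.1 u w (by tauto)
          have h2 : ok w u = 0 := hok.2.1 w u (by tauto)
          have := hok.1 u w; have := hok.1 w u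
          linarith
      · have h1 : o u w = 0 := ho.2.1 u w hadj
        have h2 : o w u = 0 := ho.2.1 w u (fun h => hadj h.symm)
        have h3 : ok u w = 0 := hok.2.1 u w (by tauto)
        have h4 : ok w u = 0 := hok.2.1 w u (by tauto)
        linarith
    have hinner : ∑ u ∈ M, ∑ w ∈ M, (ok u w - o u w) ≤ 0 := by
      have hsym : ∑ u ∈ M, ∑ w ∈ M, (ok u w - o u w)
          = ∑ u ∈ M, ∑ w ∈ M, (ok w u - o w u) := Finset.sum_comm
      have : (∑ u ∈ M, ∑ w ∈ M, (ok u w - o u w))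
          + (∑ u ∈ M, ∑ w ∈ M, (ok w u - o w u)) ≤ 0 := by
        rw [← Finset.sum_add_distrib]
        apply Finset.sum_nonpos
        intro u _
        rw [← Finset.sum_add_distrib]
        apply Finset.sum_nonpos
        intro w _
        exact hpair u w
      linarith [hsym ▸ this]
    have houter : ∑ u ∈ M, ∑ w ∈ Mᶜ, (ok u w - o u w) ≤ 0 := by
      apply Finset.sum_nonpos; intro u hu
      apply Finset.sum_nonpos; intro w hw
      have := hclose u hu w (Finset.mem_compl.1 hw)
      linarith
    linarith [hexp]
  have hlow : (M.card : ℝ) * δ ≤ ∑ u ∈ M, (outdeg ok u - outdeg o u) := by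
    have := Finset.card_nsmul_le_sum M (fun u => outdeg ok u - outdeg o u) δ
      (fun u hu => (hmemM u).1 hu)
    simpa [nsmul_eq_mul] using this
  have hcard : 0 < M.card := Finset.card_pos.2 ⟨u0, hu0M⟩
  have : (0:ℝ) < (M.card : ℝ) * δ := by positivity
  linarith

open Classical in
/-- The chain of deficiency-reachable sets. -/
noncomputable def chainS [Fintype V] (o ok : V → V → ℝ) (v : V) : ℕ → Finset V
  | 0 => {v}
  | i+1 => chainS o ok v i ∪ Finset.univ.filter
      (fun w => w ∉ chainS o ok v i ∧ ∃ u ∈ chainS o ok v i, ok u w < o u w)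

open Classical in
noncomputable def chainT [Fintype V] (o ok : V → V → ℝ) (v : V) (i : ℕ) : Finset V :=
  Finset.univ.filter (fun w => w ∉ chainS o ok v i ∧ ∃ u ∈ chainS o ok v i, ok u w < o u w)

open Classical in
lemma chainS_succ [Fintype V] (o ok : V → V → ℝ) (v : V) (i : ℕ) :
    chainS o ok v (i+1) = chainS o ok v i ∪ chainT o ok v i := by
  classical
  simp [chainS, chainT]

lemma mem_hopBall [Fintype V] (G : SimpleGraph V) (v u : V) (k : ℕ) :
    u ∈ hopBall G v k ↔ G.Reachable v u ∧ G.dist v u ≤ k := by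
  classical
  simp [hopBall]

/-- Lower bound on the local out-degree inside the ball. -/
lemma outdeg_le_ball [Fintype V] (G : SimpleGraph V) (ε : ℝ) (v : V) (k : ℕ)
    (o ok : V → V → ℝ) (hε : 0 < ε) (hε1 : ε ≤ 1) (hn : 2 ≤ Fintype.card V)
    (hk : 4 * (Real.log (Fintype.card V)) ^ 2 / ε ^ 2 ≤ (k : ℝ))
    (ho : IsOrientation G (fun _ _ => 1) o) (hf : LocallyFair o)
    (hok : OrientationOn G (hopBall G v k) ok) (hkf : LocallyFair ok) :
    outdeg o v ≤ (1 + ε) * outdeg ok v := by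
  classical
  by_contra hcon
  push_neg at hcon
  set B := hopBall G v k with hB
  set S := chainS o ok v with hSdef
  set T := chainT o ok v with hTdef
  set δ := outdeg o v - outdeg ok v with hδ
  have hhv0 : 0 ≤ outdeg ok v := Finset.sum_nonneg fun _ _ => hok.1 _ _
  have hδε : ε * outdeg ok v < δ := by nlinarith
  have hδpos : 0 < δ := lt_of_le_of_lt (by positivity) hδε
  have hmemT : ∀ i w, w ∈ T i ↔ w ∉ S i ∧ ∃ u ∈ S i, ok u w < o u w := by
    intro i w; simp [hTdef, chainT, hSdef]
  -- basic edge facts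
  have hedge : ∀ u w, ok u w < o u w → G.Adj u w := by
    intro u w hlt
    by_contra hadj
    have h0 : o u w = 0 := ho.2.1 u w hadj
    have := hok.1 u w
    linarith
  have hsumo : ∀ u w, G.Adj u w → o u w + o w u = 1 := by
    intro u w hadj; simpa using ho.2.2 u w hadj
  -- the invariant
  have inv : ∀ i, i ≤ k → ∀ u ∈ S i,
      (G.Reachable v u ∧ G.dist v u ≤ i) ∧
        outdeg ok u ≤ outdeg ok v ∧ outdeg o v ≤ outdeg o u := by
    intro i
    induction i with
    | zero =>
      intro _ u hu
      have hS0 : S 0 = {v} := rfl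
      rw [hS0] at hu
      have huv : u = v := Finset.mem_singleton.1 hu
      rw [huv]
      exact ⟨⟨SimpleGraph.Reachable.refl v, by simp⟩, le_rfl, le_rfl⟩
    | succ i ih =>
      intro hik u hu
      rw [hSdef, chainS_succ] at hu
      rcases Finset.mem_union.1 hu with hu | hu
      · obtain ⟨⟨hr, hd⟩, h1, h2⟩ := ih (by omega) u hu
        exact ⟨⟨hr, hd.trans (by omega)⟩, h1, h2⟩
      · obtain ⟨hnot, x, hxS, hlt⟩ := (hmemT i u).1 hu
        obtain ⟨⟨hr, hd⟩, hh, hg⟩ := ih (by omega) x hxS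
        have hadj : G.Adj x u := hedge x u hlt
        obtain ⟨p, hp⟩ := hr.exists_walk_length_eq_dist
        have hru : G.Reachable v u := ⟨p.concat hadj⟩
        have hdu : G.dist v u ≤ i + 1 := by
          have := SimpleGraph.dist_le (p.concat hadj)
          rw [SimpleGraph.Walk.length_concat, hp] at this
          omega
        have hxB : x ∈ B := (mem_hopBall G v x k).2 ⟨hr, by omega⟩
        have huB : u ∈ B := (mem_hopBall G v u k).2 ⟨hru, by omega⟩
        have hsok : ok x u + ok u x = 1 := hok.2.2 x u hadj hxB huB
        have hopos : 0 < o x u := lt_of_le_of_lt (hok.1 x u) hlt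
        have houx : 0 ≤ o u x := ho.1 u x
        have hso : o x u + o u x = 1 := hsumo x u hadj
        have hokux : 0 < ok u x := by linarith
        have h1 : outdeg ok u ≤ outdeg ok x := hkf u x hokux
        have h2 : outdeg o x ≤ outdeg o u := hf x u hopos
        exact ⟨⟨hru, hdu⟩, h1.trans hh, hg.trans h2⟩
  have hvS : ∀ i, v ∈ S i := by
    intro i
    induction i with
    | zero =>
      have hS0 : S 0 = {v} := rfl
      rw [hS0]; exact Finset.mem_singleton_self v
    | succ i ih => rw [hSdef, chainS_succ]; exact Finset.mem_union_left _ ih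
  have hdisj : ∀ i, Disjoint (S i) (T i) :=
    fun i => Finset.disjoint_left.mpr fun w hw hw' => ((hmemT i w).1 hw').1 hw
  -- the counting step
  have count : ∀ i, i < k →
      ((S i).card : ℝ) * δ ≤ ((T i).card : ℝ) * outdeg ok v := by
    intro i hik
    have hSB : ∀ u ∈ S i, u ∈ B := by
      intro u hu
      obtain ⟨⟨hr, hd⟩, -, -⟩ := inv i (by omega) u hu
      exact (mem_hopBall G v u k).2 ⟨hr, by omega⟩
    have hTS : ∀ w ∈ T i, w ∈ S (i+1) := by
      intro w hw; rw [hSdef, chainS_succ]; exact Finset.mem_union_right _ hw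
    have hTB : ∀ w ∈ T i, w ∈ B := by
      intro w hw
      obtain ⟨⟨hr, hd⟩, -, -⟩ := inv (i+1) (by omega) w (hTS w hw)
      exact (mem_hopBall G v w k).2 ⟨hr, by omega⟩
    have hThv : ∀ w ∈ T i, outdeg ok w ≤ outdeg ok v := by
      intro w hw
      exact (inv (i+1) (by omega) w (hTS w hw)).2.1
    -- lower bound on Φ
    have hlow : ((S i).card : ℝ) * δ ≤ ∑ u ∈ S i, (outdeg o u - outdeg ok u) := by
      have := Finset.card_nsmul_le_sum (S i) (fun u => outdeg o u - outdeg ok u) δ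
        (fun u hu => by
          obtain ⟨-, h1, h2⟩ := inv i (by omega) u hu
          simp only [hδ]; linarith)
      simpa [nsmul_eq_mul] using this
    -- expansion of Φ
    have hexp : ∑ u ∈ S i, (outdeg o u - outdeg ok u)
        = (∑ u ∈ S i, ∑ w ∈ S i, (o u w - ok u w))
          + ∑ u ∈ S i, ∑ w ∈ (S i)ᶜ, (o u w - ok u w) := by
      rw [← Finset.sum_add_distrib]
      apply Finset.sum_congr rfl
      intro u _
      rw [Finset.sum_add_sum_compl, Finset.sum_sub_distrib]
      simp [outdeg]
    -- inner part vanishes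
    have hpair : ∀ u ∈ S i, ∀ w ∈ S i, (o u w - ok u w) + (o w u - ok w u) = 0 := by
      intro u hu w hw
      by_cases hadj : G.Adj u w
      · have h1 := hsumo u w hadj
        have h2 := hok.2.2 u w hadj (hSB u hu) (hSB w hw)
        linarith
      · have h1 : o u w = 0 := ho.2.1 u w hadj
        have h2 : o w u = 0 := ho.2.1 w u (fun h => hadj h.symm)
        have h3 : ok u w = 0 := hok.2.1 u w (by tauto)
        have h4 : ok w u = 0 := hok.2.1 w u (by tauto)
        linarith
    have hinner : ∑ u ∈ S i, ∑ w ∈ S i, (o u w - ok u w) = 0 := by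
      have hsym : ∑ u ∈ S i, ∑ w ∈ S i, (o u w - ok u w)
          = ∑ u ∈ S i, ∑ w ∈ S i, (o w u - ok w u) := Finset.sum_comm
      have hz : (∑ u ∈ S i, ∑ w ∈ S i, (o u w - ok u w))
          + (∑ u ∈ S i, ∑ w ∈ S i, (o w u - ok w u)) = 0 := by
        rw [← Finset.sum_add_distrib]
        apply Finset.sum_eq_zero
        intro u hu
        rw [← Finset.sum_add_distrib]
        apply Finset.sum_eq_zero
        intro w hw
        exact hpair u hu w hw
      linarith [hsym ▸ hz]
    -- outer part
    have houter : ∑ u ∈ S i, ∑ w ∈ (S i)ᶜ, (o u w - ok u w)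
        ≤ ((T i).card : ℝ) * outdeg ok v := by
      have step1 : ∀ u ∈ S i, ∑ w ∈ (S i)ᶜ, (o u w - ok u w) ≤ ∑ w ∈ T i, ok w u := by
        intro u hu
        have hterm : ∀ w ∈ (S i)ᶜ, (o u w - ok u w)
            ≤ (if w ∈ T i then ok w u else 0) := by
          intro w hw
          by_cases hlt : ok u w < o u w
          · have hwT : w ∈ T i := (hmemT i w).2 ⟨Finset.mem_compl.1 hw, u, hu, hlt⟩
            rw [if_pos hwT]
            have hadj : G.Adj u w := hedge u w hlt
            have hso := hsumo u w hadj
            have hsok : ok u w + ok w u = 1 := hok.2.2 u w hadj (hSB u hu) (hTB w hwT)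
            have := ho.1 w u
            linarith
          · push_neg at hlt
            have : (0:ℝ) ≤ if w ∈ T i then ok w u else 0 := by
              split
              · exact hok.1 w u
              · exact le_rfl
            linarith
        calc ∑ w ∈ (S i)ᶜ, (o u w - ok u w)
            ≤ ∑ w ∈ (S i)ᶜ, (if w ∈ T i then ok w u else 0) :=
              Finset.sum_le_sum hterm
          _ = ∑ w ∈ (S i)ᶜ ∩ T i, ok w u := Finset.sum_ite_mem _ _ _
          _ = ∑ w ∈ T i, ok w u := by
              congr 1
              exact Finset.inter_eq_right.2 fun w hw =>
                Finset.mem_compl.2 ((hmemT i w).1 hw).1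
      calc ∑ u ∈ S i, ∑ w ∈ (S i)ᶜ, (o u w - ok u w)
          ≤ ∑ u ∈ S i, ∑ w ∈ T i, ok w u := Finset.sum_le_sum step1
        _ = ∑ w ∈ T i, ∑ u ∈ S i, ok w u := Finset.sum_comm
        _ ≤ ∑ w ∈ T i, outdeg ok w := by
            apply Finset.sum_le_sum
            intro w _
            exact Finset.sum_le_sum_of_subset_of_nonneg (Finset.subset_univ _)
              (fun x _ _ => hok.1 w x)
        _ ≤ ∑ w ∈ T i, outdeg ok v := Finset.sum_le_sum fun w hw => hThv w hw
        _ = ((T i).card : ℝ) * outdeg ok v := by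
            rw [Finset.sum_const, nsmul_eq_mul]
    calc ((S i).card : ℝ) * δ ≤ ∑ u ∈ S i, (outdeg o u - outdeg ok u) := hlow
      _ = _ + _ := hexp
      _ ≤ 0 + ((T i).card : ℝ) * outdeg ok v := by rw [hinner]; exact add_le_add_right houter 0
      _ = ((T i).card : ℝ) * outdeg ok v := by ring
  -- growth of cardinalities
  have hTgrow : ∀ i, i < k → ε * ((S i).card : ℝ) < ((T i).card : ℝ) := by
    intro i hik
    have hc := count i hik
    have hcard1 : 1 ≤ (S i).card := Finset.card_pos.2 ⟨v, hvS i⟩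
    have hcard1' : (1:ℝ) ≤ ((S i).card : ℝ) := by exact_mod_cast hcard1
    rcases eq_or_lt_of_le hhv0 with hhv | hhv
    · exfalso
      rw [← hhv, mul_zero] at hc
      nlinarith
    · have h1 : ε * ((S i).card : ℝ) * outdeg ok v < ((S i).card : ℝ) * δ := by
        nlinarith
      have h2 : ε * ((S i).card : ℝ) * outdeg ok v < ((T i).card : ℝ) * outdeg ok v :=
        lt_of_lt_of_le h1 hc
      exact lt_of_mul_lt_mul_right h2 hhv0
  -- geometric growth
  have grow : ∀ i, i ≤ k → (1 + ε) ^ i ≤ ((S i).card : ℝ) := by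
    intro i
    induction i with
    | zero =>
      intro _
      have hS0 : S 0 = {v} := rfl
      rw [hS0]; simp
    | succ i ih =>
      intro hik
      have h1 := ih (by omega)
      have h2 := hTgrow i (by omega)
      have hcardu : ((S (i+1)).card : ℝ) = ((S i).card : ℝ) + ((T i).card : ℝ) := by
        rw [hSdef, chainS_succ]
        rw [Finset.card_union_of_disjoint (hdisj i)]
        push_cast
        ring
      have hpow : (0:ℝ) ≤ (1 + ε) ^ i := by positivity
      calc (1 + ε) ^ (i+1) = (1 + ε) ^ i * (1 + ε) := by ring
        _ ≤ ((S i).card : ℝ) * (1 + ε) := by nlinarith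
        _ = ((S i).card : ℝ) + ε * ((S i).card : ℝ) := by ring
        _ ≤ ((S (i+1)).card : ℝ) := by rw [hcardu]; linarith
  have hfinal : (1 + ε) ^ k ≤ (Fintype.card V : ℝ) := by
    calc (1 + ε) ^ k ≤ ((S k).card : ℝ) := grow k le_rfl
      _ ≤ (Fintype.card V : ℝ) := by exact_mod_cast Finset.card_le_univ (S k)
  -- numeric contradiction
  set L := Real.log (Fintype.card V) with hL
  have hn2 : (2:ℝ) ≤ (Fintype.card V : ℝ) := by exact_mod_cast hn
  have hLlog2 : Real.log 2 ≤ L := Real.log_le_log (by norm_num) hn2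
  have hlog2 : (0.6931471803 : ℝ) < Real.log 2 := Real.log_two_gt_d9
  have hLpos : 0 < L := lt_of_lt_of_le (by linarith) hLlog2
  have hklog : (k : ℝ) * Real.log (1 + ε) ≤ L := by
    have h1 : Real.log ((1 + ε) ^ k) ≤ L := Real.log_le_log (by positivity) hfinal
    rwa [Real.log_pow] at h1
  have hlow2 : ε / 2 ≤ Real.log (1 + ε) := by
    have h1 : Real.log ((1 + ε)⁻¹) ≤ (1 + ε)⁻¹ - 1 :=
      Real.log_le_sub_one_of_pos (by positivity)
    rw [Real.log_inv] at h1
    have h2 : (1 + ε)⁻¹ * (1 + ε) = 1 := inv_mul_cancel₀ (by positivity)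
    nlinarith [sq_nonneg ε]
  have hknn : (0:ℝ) ≤ (k : ℝ) := Nat.cast_nonneg k
  have e1 : 4 * L ^ 2 ≤ (k : ℝ) * ε ^ 2 := by
    rw [div_le_iff₀ (by positivity)] at hk
    linarith
  have e2 : (k : ℝ) * ε ≤ 2 * L := by
    have := mul_le_mul_of_nonneg_left hlow2 hknn
    linarith
  have e3 : (k : ℝ) * ε ^ 2 ≤ 2 * L * ε := by nlinarith
  have e4 : 2 * L ≤ ε := by nlinarith
  linarith

/-- there is an absolute constant `C` such that for every unit-weight graph,
every `0 < ε ≤ 1` and every `k ≥ C·ε⁻²·log² n`, the local density of `v` computed inside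
its `k`-hop neighbourhood is a `(1+ε)`-approximation of its local density in `G`
(local densities being out-degrees in locally fair orientations). -/
theorem local_density_is_local :
    ∃ C : ℝ, 0 < C ∧
      ∀ (V : Type) [Fintype V] (G : SimpleGraph V) (ε : ℝ) (v : V) (k : ℕ)
        (o ok : V → V → ℝ),
        0 < ε → ε ≤ 1 → 2 ≤ Fintype.card V →
        C * (Real.log (Fintype.card V)) ^ 2 / ε ^ 2 ≤ (k : ℝ) →
        IsOrientation G (fun _ _ => 1) o → LocallyFair o →
        OrientationOn G (hopBall G v k) ok → LocallyFair ok →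
        (1 + ε)⁻¹ * outdeg o v ≤ outdeg ok v ∧ outdeg ok v ≤ (1 + ε) * outdeg o v := by
  refine ⟨4, by norm_num, ?_⟩
  intro V _ G ε v k o ok hε hε1 hn hk ho hf hok hkf
  have h1 := outdeg_sub_le G (hopBall G v k) o ok ho hf hok hkf v
  have h2 := outdeg_le_ball G ε v k o ok hε hε1 hn hk ho hf hok hkf
  have h0 : 0 ≤ outdeg o v := outdeg_nonneg ho.1 v
  have hpos : (0:ℝ) < 1 + ε := by linarith
  constructor
  · have h3 := mul_le_mul_of_nonneg_left h2 (le_of_lt (inv_pos.2 hpos))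
    calc (1 + ε)⁻¹ * outdeg o v ≤ (1 + ε)⁻¹ * ((1 + ε) * outdeg ok v) := h3
      _ = outdeg ok v := by field_simp
  · nlinarith
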